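/- Let G be a finite group, N an abelian normal subgroup of G, and B : N → N → ℂˣ a G-invariant alternating bicharacter. Let a, b ∈ N (so that the conjugates gbg⁻¹ and g⁻¹ag lie in N, which is contained in the centralizers Z_a and Z_b respectively). Let α be a finite-dimensional complex representation of Z_a with character χ_α satisfying χ_α(h) = B(a,h)·(dim α) for all h ∈ N, and let β be a finite-dimensional complex representation of Z_b with χ_β(h) = B(b,h)·(dim β) for all h ∈ N. Then for every g ∈ G, χ_α(gbg⁻¹)·χ_β(g⁻¹ag) = (dim α)·(dim β). -/

import Mathlib

open scoped Classical

/-- The character of a representation `α` of the centralizer of `a`, extended by zero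
to a function on all of `G`. -/
noncomputable def chiExt {G V : Type*} [Group G] [AddCommGroup V] [Module ℂ V]
    (a : G) (α : Representation ℂ (Subgroup.centralizer {a}) V) (x : G) : ℂ :=
  if hx : x ∈ Subgroup.centralizer {a} then LinearMap.trace ℂ V (α ⟨x, hx⟩) else 0

/-- For a finite group `G`, an abelian normal subgroup `N`, a `G`-invariant
alternating bicharacter `B` on `N`, and representations `α` of `Z_a`, `β` of `Z_b`
(`a, b ∈ N`) whose characters restrict on `N` to `B(a,·)·dim α` resp. `B(b,·)·dim β`,
one has `χ_α(g b g⁻¹) · χ_β(g⁻¹ a g) = dim α · dim β` for every `g ∈ G`. -/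
theorem chi_mul_chi_eq_dim_mul_dim {G : Type*} [Group G] [Finite G]
    (N : Subgroup G) (hN : N.Normal) (hcomm : ∀ x ∈ N, ∀ y ∈ N, x * y = y * x)
    (B : ↥N → ↥N → ℂˣ)
    (hB1 : ∀ h₁ h₂ h : ↥N, B (h₁ * h₂) h = B h₁ h * B h₂ h)
    (hB2 : ∀ h h₁ h₂ : ↥N, B h (h₁ * h₂) = B h h₁ * B h h₂)
    (hB3 : ∀ h : ↥N, B h h = 1)
    (hBinv : ∀ (g : G) (h₁ h₂ : ↥N),
      B ⟨g * (h₁ : G) * g⁻¹, hN.conj_mem (h₁ : G) h₁.2 g⟩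
        ⟨g * (h₂ : G) * g⁻¹, hN.conj_mem (h₂ : G) h₂.2 g⟩ = B h₁ h₂)
    {V W : Type*} [AddCommGroup V] [Module ℂ V] [FiniteDimensional ℂ V]
    [AddCommGroup W] [Module ℂ W] [FiniteDimensional ℂ W]
    (a b : G) (ha : a ∈ N) (hb : b ∈ N)
    (α : Representation ℂ (Subgroup.centralizer {a}) V)
    (β : Representation ℂ (Subgroup.centralizer {b}) W)
    (hχα : ∀ h : ↥N, chiExt a α (h : G) = (B ⟨a, ha⟩ h : ℂ) * (Module.finrank ℂ V : ℂ))
    (hχβ : ∀ h : ↥N, chiExt b β (h : G) = (B ⟨b, hb⟩ h : ℂ) * (Module.finrank ℂ W : ℂ)) :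
    ∀ g : G, chiExt a α (g * b * g⁻¹) * chiExt b β (g⁻¹ * a * g) =
      (Module.finrank ℂ V : ℂ) * (Module.finrank ℂ W : ℂ) := by
  intro g
  have hanti : ∀ x y : ↥N, (B x y : ℂ) * (B y x : ℂ) = 1 := by
    intro x y
    have h := hB3 (x * y)
    rw [hB1, hB2, hB2, hB3 x, hB3 y, one_mul, mul_one] at h
    have h' := congrArg Units.val h
    push_cast at h'
    exact h'
  have hm2 : g⁻¹ * a * g ∈ N := by simpa using hN.conj_mem a ha g⁻¹
  set h₁ : ↥N := ⟨g * b * g⁻¹, hN.conj_mem b hb g⟩ with hh₁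
  set h₂ : ↥N := ⟨g⁻¹ * a * g, hm2⟩ with hh₂
  have e1 : chiExt a α (g * b * g⁻¹) = (B ⟨a, ha⟩ h₁ : ℂ) * (Module.finrank ℂ V : ℂ) :=
    hχα h₁
  have e2 : chiExt b β (g⁻¹ * a * g) = (B ⟨b, hb⟩ h₂ : ℂ) * (Module.finrank ℂ W : ℂ) :=
    hχβ h₂
  have key : B ⟨b, hb⟩ h₂ = B h₁ ⟨a, ha⟩ := by
    rw [← hBinv g ⟨b, hb⟩ h₂]
    congr 1
    exact Subtype.ext (by show g * (g⁻¹ * a * g) * g⁻¹ = a; group)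
  rw [e1, e2, key]
  calc (B ⟨a, ha⟩ h₁ : ℂ) * (Module.finrank ℂ V : ℂ) *
        ((B h₁ ⟨a, ha⟩ : ℂ) * (Module.finrank ℂ W : ℂ))
      = ((B ⟨a, ha⟩ h₁ : ℂ) * (B h₁ ⟨a, ha⟩ : ℂ)) *
        ((Module.finrank ℂ V : ℂ) * (Module.finrank ℂ W : ℂ)) := by ring
    _ = (Module.finrank ℂ V : ℂ) * (Module.finrank ℂ W : ℂ) := by
        rw [hanti ⟨a, ha⟩ h₁, one_mul]
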